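/- arXiv:2006.05592 — 7 statements merged into one kernel-verified Lean document; each statement's English description precedes it below -/
import Mathlib

section
/- For every integer c ≥ 1 with c dividing n, there exist matrices X, Y ∈ ℝ^{n×3} such that σ(XYᵀ) (where σ(t) = max(0, min(1, t)) is applied entrywise) is exactly the adjacency matrix of the disjoint union of n/c cliques each on c vertices, i.e., σ(XYᵀ)_{ij} = 1 if i and j lie in the same block of size c, and σ(XYᵀ)_{ij} = 0 otherwise. (In particular, the diagonal entries corresponding to same-block pairs include i = j, so this realizes the adjacency matrix with self-loops; equivalently, the block-diagonal 0/1 matrix with n/c all-ones blocks of size c.) -/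
open Matrix

noncomputable def sigma (t : ℝ) : ℝ := max 0 (min 1 t)

theorem exists_rank_three_clique_union (n c : ℕ) (hc : 1 ≤ c) (hdvd : c ∣ n) :
    ∃ X Y : Matrix (Fin n) (Fin 3) ℝ,
      ∀ i j : Fin n,
        sigma ((X * Yᵀ) i j) = if i.val / c = j.val / c then 1 else 0 := by
  set b : Fin n → ℝ := fun i => (i.val / c : ℕ) with hb
  refine ⟨Matrix.of fun i => ![1 - b i ^ 2, b i, 1], Matrix.of fun j => ![1, 2 * b j, - b j ^ 2], ?_⟩
  intro i j
  have hmul : ((Matrix.of fun i => ![1 - b i ^ 2, b i, 1]) *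
      (Matrix.of fun j => ![1, 2 * b j, - b j ^ 2])ᵀ) i j = 1 - (b i - b j) ^ 2 := by
    simp [Matrix.mul_apply, Fin.sum_univ_three, Matrix.transpose_apply]
    ring
  rw [hmul]
  by_cases h : i.val / c = j.val / c
  · simp [sigma, hb, h]
  · have hne : b i ≠ b j := by
      simp only [hb]
      exact_mod_cast fun hx => h (Nat.cast_injective hx)
    have h1 : (1 : ℝ) ≤ |b i - b j| := by
      have : b i - b j ≠ 0 := sub_ne_zero.mpr hne
      have hint : ∃ k : ℤ, b i - b j = (k : ℝ) := by
        exact ⟨((i.val / c : ℕ) : ℤ) - ((j.val / c : ℕ) : ℤ), by simp only [hb, Int.cast_sub, Int.cast_natCast]⟩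
      obtain ⟨k, hk⟩ := hint
      rw [hk]
      rw [hk] at this
      have hk0 : k ≠ 0 := by exact_mod_cast this
      exact_mod_cast Int.one_le_abs (by exact_mod_cast hk0)
    have h2 : (1 : ℝ) ≤ (b i - b j) ^ 2 := by
      calc (1:ℝ) = 1 ^ 2 := by ring
        _ ≤ |b i - b j| ^ 2 := by
            exact pow_le_pow_left₀ (by norm_num) h1 2
        _ = (b i - b j) ^ 2 := sq_abs _
    have : 1 - (b i - b j) ^ 2 ≤ 0 := by linarith
    simp [sigma, h, min_eq_right (by linarith : 1 - (b i - b j)^2 ≤ 1), max_eq_left this]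
end

section
/- Let t₁ < t₂ < ... < t_c be integers in {1,...,n}. Then there exists a real polynomial p of degree at most 2c such that p(t) > 0 for t ∈ {t₁,...,t_c} and p(t) < 0 for all integers t ∈ {1,...,n} \ {t₁,...,t_c}. -/
open Polynomial Finset

lemma factor_pos_of_ne (a b : ℤ) (h : a ≠ b) : 0 < ((a:ℝ) - b)^2 - 1/4 := by
  have h0 : a - b ≠ 0 := sub_ne_zero.mpr h
  have h1 : (1:ℤ) ≤ |a - b| := Int.one_le_abs h0
  have h2 : (1:ℤ) ≤ (a - b)^2 := by nlinarith [sq_abs (a - b)]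
  have h3 : (1:ℝ) ≤ ((a:ℝ) - b)^2 := by
    have h4 : ((1:ℤ):ℝ) ≤ (((a-b)^2 : ℤ) : ℝ) := Int.cast_le.mpr h2
    push_cast at h4
    linarith
  linarith

theorem exists_sign_separating_polynomial (n c : ℕ) (t : Fin c → ℤ)
    (hmono : StrictMono t) (hrange : ∀ i, t i ∈ Finset.Icc (1 : ℤ) n) :
    ∃ p : Polynomial ℝ, p.degree ≤ 2 * c ∧
      (∀ i : Fin c, 0 < p.eval ((t i : ℝ))) ∧
      (∀ m : ℤ, m ∈ Finset.Icc (1 : ℤ) n → (∀ i, t i ≠ m) →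
        p.eval ((m : ℝ)) < 0) := by
  set q : Polynomial ℝ := ∏ i : Fin c, ((X - C ((t i : ℤ) : ℝ))^2 - C (1/4)) with hq
  have heval : ∀ x : ℝ, q.eval x = ∏ i : Fin c, ((x - (t i : ℝ))^2 - 1/4) := by
    intro x; simp [hq, eval_prod]
  refine ⟨-q, ?_, ?_, ?_⟩
  · rw [degree_neg, hq]
    refine le_trans (degree_prod_le _ _) ?_
    have h1 : ∀ i : Fin c, degree ((X - C ((t i : ℤ) : ℝ))^2 - C (1/4)) ≤ 2 := by
      intro i
      refine le_trans (degree_sub_le _ _) ?_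
      rw [degree_pow, degree_X_sub_C]
      simp
    calc ∑ i : Fin c, degree ((X - C ((t i : ℤ) : ℝ))^2 - C (1/4))
        ≤ ∑ _i : Fin c, (2 : WithBot ℕ) := Finset.sum_le_sum (fun i _ => h1 i)
      _ = (2 * c : ℕ) := by
          rw [Finset.sum_const, Finset.card_univ, Fintype.card_fin]
          push_cast
          ring
  · intro i
    rw [eval_neg, heval]
    have hmul := Finset.mul_prod_erase Finset.univ
      (fun j => (((t i : ℤ) : ℝ) - (t j : ℝ))^2 - 1/4) (Finset.mem_univ i)
    beta_reduce at hmul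
    have hpos : 0 < ∏ j ∈ Finset.univ.erase i, ((((t i : ℤ) : ℝ) - (t j : ℝ))^2 - 1/4) := by
      refine Finset.prod_pos ?_
      intro j hj
      exact factor_pos_of_ne _ _ (fun h => (Finset.mem_erase.mp hj).1 (hmono.injective h.symm))
    have h5 : ((((t i : ℤ) : ℝ) - (t i : ℝ))^2 - 1/4) = -(1/4) := by ring
    rw [h5] at hmul
    nlinarith [hmul, hpos]
  · intro m hm hne
    rw [eval_neg, heval]
    have hpos : 0 < ∏ i : Fin c, ((((m : ℤ) : ℝ) - (t i : ℝ))^2 - 1/4) := by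
      refine Finset.prod_pos ?_
      intro i _
      exact factor_pos_of_ne m (t i) (fun h => hne i h.symm)
    linarith
end

section
/- Let a ∈ {0,1}^n be a vector with at most c nonzero entries. Then there exists x ∈ ℝ^{2c+1} such that for every t ∈ {1,...,n}, the sign of Σ_{j=1}^{2c+1} x_j · t^{j−1} is positive if a_t = 1 and negative if a_t = 0. -/
open Polynomial Finset

lemma neg_one_pow_card_mul_prod_pos {α : Type*} {S : Finset α} {f : α → ℝ}
    (h : ∀ s ∈ S, f s < 0) : 0 < (-1 : ℝ) ^ S.card * ∏ s ∈ S, f s := by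
  classical
  have hprod : ∏ s ∈ S, f s = (-1 : ℝ) ^ S.card * ∏ s ∈ S, (-f s) := by
    rw [← Finset.prod_const, ← Finset.prod_mul_distrib]
    exact Finset.prod_congr rfl (fun s hs => by ring)
  have hpos : 0 < ∏ s ∈ S, (-f s) :=
    Finset.prod_pos (fun s hs => by linarith [h s hs])
  have hsq : ((-1 : ℝ) ^ S.card) * ((-1 : ℝ) ^ S.card) = 1 := by
    rw [← pow_add, ← two_mul, pow_mul, neg_one_sq, one_pow]
  rw [hprod, ← mul_assoc, hsq, one_mul]
  exact hpos

theorem exists_sign_pattern_vector (n c : ℕ) (a : Fin n → Bool)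
    (hsparse : (Finset.univ.filter (fun t => a t = true)).card ≤ c) :
    ∃ x : Fin (2 * c + 1) → ℝ, ∀ t : Fin n,
      (a t = true → 0 < ∑ j : Fin (2 * c + 1), x j * ((t.val + 1 : ℝ)) ^ (j : ℕ)) ∧
      (a t = false → ∑ j : Fin (2 * c + 1), x j * ((t.val + 1 : ℝ)) ^ (j : ℕ) < 0) := by
  classical
  set S : Finset (Fin n) := Finset.univ.filter (fun t => a t = true) with hS
  set P : ℝ[X] := C ((-1 : ℝ) ^ (S.card + 1)) *
      ∏ s ∈ S, (C (1/4 : ℝ) - (X - C ((s.val : ℝ) + 1)) ^ 2) with hP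
  have hdeg : P.natDegree < 2 * c + 1 := by
    have h1 : P.natDegree ≤ (C ((-1 : ℝ) ^ (S.card + 1))).natDegree +
        (∏ s ∈ S, (C (1/4 : ℝ) - (X - C ((s.val : ℝ) + 1)) ^ 2)).natDegree :=
      natDegree_mul_le
    have h2 : (∏ s ∈ S, (C (1/4 : ℝ) - (X - C ((s.val : ℝ) + 1)) ^ 2)).natDegree ≤
        ∑ s ∈ S, 2 := by
      refine le_trans (Polynomial.natDegree_prod_le _ _) (Finset.sum_le_sum ?_)
      intro s hs
      refine le_trans (Polynomial.natDegree_sub_le _ _) ?_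
      simp only [natDegree_C]
      have : ((X - C ((s.val : ℝ) + 1)) ^ 2).natDegree ≤ 2 := by
        rw [Polynomial.natDegree_pow, Polynomial.natDegree_X_sub_C]
      omega
    have h3 : ∑ s ∈ S, 2 = 2 * S.card := by
      rw [Finset.sum_const, smul_eq_mul, mul_comm]
    simp only [natDegree_C] at h1
    omega
  refine ⟨fun j => P.coeff j, fun t => ?_⟩
  have heval : ∑ j : Fin (2 * c + 1), P.coeff j * ((t.val + 1 : ℝ)) ^ (j : ℕ) =
      P.eval ((t.val : ℝ) + 1) := by
    rw [Polynomial.eval_eq_sum_range' hdeg, Fin.sum_univ_eq_sum_range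
      (fun j => P.coeff j * ((t.val + 1 : ℝ)) ^ j)]
  set u : ℝ := (t.val : ℝ) + 1 with hu
  set f : Fin n → ℝ := fun s => 1/4 - (u - ((s.val : ℝ) + 1)) ^ 2 with hf
  have hevalP : P.eval u = (-1 : ℝ) ^ (S.card + 1) * ∏ s ∈ S, f s := by
    simp [hP, eval_prod, hf]
  have hneg : ∀ s : Fin n, s ≠ t → f s < 0 := by
    intro s hst
    have hval : (s.val : ℤ) ≠ (t.val : ℤ) := by
      intro h
      exact hst (Fin.ext (by exact_mod_cast h))
    have h1 : (1 : ℤ) ≤ |(t.val : ℤ) - (s.val : ℤ)| := by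
      rcases abs_cases ((t.val : ℤ) - (s.val : ℤ)) with ⟨h, _⟩ | ⟨h, _⟩ <;> omega
    have h2 : (1 : ℝ) ≤ |(t.val : ℝ) - (s.val : ℝ)| := by
      calc (1 : ℝ) = ((1 : ℤ) : ℝ) := by norm_num
        _ ≤ ((|(t.val : ℤ) - (s.val : ℤ)| : ℤ) : ℝ) := by exact_mod_cast h1
        _ = |(t.val : ℝ) - (s.val : ℝ)| := by push_cast; rfl
    have h3 : (1 : ℝ) ≤ ((t.val : ℝ) - (s.val : ℝ)) ^ 2 := by
      nlinarith [abs_nonneg ((t.val : ℝ) - (s.val : ℝ)), sq_abs ((t.val : ℝ) - (s.val : ℝ))]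
    have : u - ((s.val : ℝ) + 1) = (t.val : ℝ) - (s.val : ℝ) := by rw [hu]; ring
    rw [hf]
    simp only [this]
    nlinarith
  rw [heval, hevalP]
  constructor
  · intro hat
    have htS : t ∈ S := by simp [hS, hat]
    have hcard : S.card = (S.erase t).card + 1 := by
      rw [Finset.card_erase_add_one htS]
    have hsplit : ∏ s ∈ S, f s = f t * ∏ s ∈ S.erase t, f s :=
      (Finset.mul_prod_erase S f htS).symm
    have hft : 0 < f t := by
      rw [hf]
      have : u - ((t.val : ℝ) + 1) = 0 := by rw [hu]; ring
      simp only [this]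
      norm_num
    have herase : 0 < (-1 : ℝ) ^ (S.erase t).card * ∏ s ∈ S.erase t, f s :=
      neg_one_pow_card_mul_prod_pos (fun s hs => hneg s (Finset.ne_of_mem_erase hs))
    have hpow : (-1 : ℝ) ^ (S.card + 1) = (-1 : ℝ) ^ (S.erase t).card := by
      rw [hcard, pow_succ, pow_succ]
      ring
    rw [hpow, hsplit]
    calc (0 : ℝ) < f t * ((-1 : ℝ) ^ (S.erase t).card * ∏ s ∈ S.erase t, f s) :=
          mul_pos hft herase
      _ = (-1 : ℝ) ^ (S.erase t).card * (f t * ∏ s ∈ S.erase t, f s) := by ring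
  · intro hat
    have htS : t ∉ S := by simp [hS, hat]
    have hall : ∀ s ∈ S, f s < 0 := fun s hs => hneg s (fun h => htS (h ▸ hs))
    have hpos : 0 < (-1 : ℝ) ^ S.card * ∏ s ∈ S, f s :=
      neg_one_pow_card_mul_prod_pos hall
    have : (-1 : ℝ) ^ (S.card + 1) * ∏ s ∈ S, f s =
        -((-1 : ℝ) ^ S.card * ∏ s ∈ S, f s) := by rw [pow_add]; ring
    rw [this]
    linarith
end

section
/- Let A ∈ {0,1}^{n×n} be a matrix in which every row has at most c nonzero entries. Then there exist matrices X, Y ∈ ℝ^{n×(2c+1)} and a scaling such that A = σ(XYᵀ), where σ(t) = max(0, min(1, t)) is applied entrywise. In particular, the adjacency matrix of any graph of maximum degree at most c admits an exact factorization of this form with embedding dimension 2c+1. -/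
open Matrix

theorem exact_factorization_of_sparse_rows (n c : ℕ) (A : Matrix (Fin n) (Fin n) ℝ)
    (hbin : ∀ i j, A i j = 0 ∨ A i j = 1)
    (hsparse : ∀ i, (Finset.univ.filter (fun j => A i j ≠ 0)).card ≤ c) :
    ∃ X Y : Matrix (Fin n) (Fin (2 * c + 1)) ℝ, A = (X * Yᵀ).map sigma := by
  classical
  set S : Fin n → Finset (Fin n) := fun i => Finset.univ.filter (fun j => A i j ≠ 0) with hS
  set P : Fin n → Polynomial ℝ :=
    fun i => 1 - ∏ s ∈ S i, (Polynomial.X - Polynomial.C (s : ℝ)) ^ 2 with hP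
  have hdeg : ∀ i, (P i).natDegree < 2 * c + 1 := by
    intro i
    have h1 : (∏ s ∈ S i, (Polynomial.X - Polynomial.C (s : ℝ)) ^ 2).natDegree ≤ 2 * c := by
      refine le_trans (Polynomial.natDegree_prod_le _ _) ?_
      have : ∀ s ∈ S i, ((Polynomial.X - Polynomial.C (s : ℝ)) ^ 2).natDegree ≤ 2 := by
        intro s _
        refine le_trans (Polynomial.natDegree_pow_le) ?_
        have := Polynomial.natDegree_X_sub_C ((s : ℕ) : ℝ)
        omega
      refine le_trans (Finset.sum_le_sum this) ?_
      simp only [Finset.sum_const, smul_eq_mul]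
      have hc : (S i).card ≤ c := hsparse i
      omega
    have h2 := Polynomial.natDegree_sub_le (1 : Polynomial ℝ)
      (∏ s ∈ S i, (Polynomial.X - Polynomial.C (s : ℝ)) ^ 2)
    simp only [Polynomial.natDegree_one] at h2
    have : (P i).natDegree ≤ 2 * c := le_trans h2 (by simpa using h1)
    omega
  refine ⟨Matrix.of (fun i k => (P i).coeff k),
    Matrix.of (fun j k => ((j : ℕ) : ℝ) ^ (k : ℕ)), ?_⟩
  ext i j
  rw [Matrix.map_apply, Matrix.mul_apply]
  have heval : ∑ k : Fin (2 * c + 1), (P i).coeff k * ((j : ℕ) : ℝ) ^ (k : ℕ)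
      = (P i).eval ((j : ℕ) : ℝ) := by
    rw [Polynomial.eval_eq_sum_range' (hdeg i)]
    rw [← Fin.sum_univ_eq_sum_range (fun k => (P i).coeff k * ((j : ℕ) : ℝ) ^ k)]
  simp only [Matrix.transpose_apply, Matrix.of_apply]
  rw [heval]
  have hevalP : (P i).eval ((j : ℕ) : ℝ)
      = 1 - ∏ s ∈ S i, (((j : ℕ) : ℝ) - ((s : ℕ) : ℝ)) ^ 2 := by
    simp [hP, Polynomial.eval_prod]
  rcases hbin i j with h0 | h1
  · -- A i j = 0, j ∉ S i, product ≥ 1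
    have hj : j ∉ S i := by simp [hS, h0]
    have hprod : (1 : ℝ) ≤ ∏ s ∈ S i, (((j : ℕ) : ℝ) - ((s : ℕ) : ℝ)) ^ 2 := by
      have key : ∀ s ∈ S i, (1 : ℝ) ≤ (((j : ℕ) : ℝ) - ((s : ℕ) : ℝ)) ^ 2 := by
        intro s hs
        have hne : (j : ℕ) ≠ (s : ℕ) := by
          intro h
          exact hj (by rwa [Fin.val_injective h])
        have hz : ((j : ℕ) : ℤ) - ((s : ℕ) : ℤ) ≠ 0 := by
          intro h; apply hne; omega
        have : (1 : ℤ) ≤ (((j : ℕ) : ℤ) - ((s : ℕ) : ℤ)) ^ 2 := by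
          have := Int.one_le_abs hz
          nlinarith [sq_abs (((j : ℕ) : ℤ) - ((s : ℕ) : ℤ))]
        have : ((1:ℤ):ℝ) ≤ (((((j : ℕ) : ℤ) - ((s : ℕ) : ℤ)) ^ 2 : ℤ) : ℝ) := Int.cast_le.2 this
        push_cast at this
        linarith
      calc (1 : ℝ) = ∏ _s ∈ S i, (1 : ℝ) := by simp
        _ ≤ ∏ s ∈ S i, (((j : ℕ) : ℝ) - ((s : ℕ) : ℝ)) ^ 2 :=
          Finset.prod_le_prod (fun _ _ => zero_le_one) key
    have hle : (P i).eval ((j : ℕ) : ℝ) ≤ 0 := by rw [hevalP]; linarith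
    rw [h0]
    unfold sigma
    rw [min_eq_right (le_trans hle zero_le_one), max_eq_left hle]
  · -- A i j = 1, j ∈ S i, product = 0
    have hj : j ∈ S i := by simp [hS, h1]
    have hprod : ∏ s ∈ S i, (((j : ℕ) : ℝ) - ((s : ℕ) : ℝ)) ^ 2 = 0 :=
      Finset.prod_eq_zero hj (by simp)
    rw [h1, hevalP, hprod]
    norm_num [sigma]
end

section
/- Suppose G is a graph on n vertices whose adjacency matrix A satisfies A = σ(XYᵀ) for X, Y ∈ ℝ^{n×k}, and G is the disjoint union of n/c cliques of size c (with c ≥ 3 dividing n). Then a graph with maximum degree c−1 and at least (n/c)·C(c,3) ≥ n(c−1)(c−2)/6 triangles admits an embedding of dimension k = 3; i.e., there is no lower bound forcing k ≥ n/polylog(n) once the factorization XYᵀ is allowed to be non-symmetric (non-PSD). -/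
open Matrix

lemma six_mul_choose_three (c : ℕ) (hc : 3 ≤ c) :
    c.choose 3 * 6 = c * (c - 1) * (c - 2) := by
  obtain ⟨m, rfl⟩ : ∃ m, c = m + 3 := ⟨c - 3, by omega⟩
  have hfac := Nat.choose_mul_factorial_mul_factorial (show 3 ≤ m + 3 by omega)
  have h3 : (3 : ℕ).factorial = 6 := by decide
  have hm : m + 3 - 3 = m := by omega
  rw [h3, hm] at hfac
  have hbig : (m + 3).factorial = (m + 3) * (m + 2) * (m + 1) * m.factorial := by
    rw [show m + 3 = (m + 2) + 1 from rfl, Nat.factorial_succ,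
      show m + 2 = (m + 1) + 1 from rfl, Nat.factorial_succ, Nat.factorial_succ]
    ring
  rw [hbig] at hfac
  have hpos := m.factorial_pos
  have : (m + 3).choose 3 * 6 = (m + 3) * (m + 2) * (m + 1) :=
    Nat.eq_of_mul_eq_mul_right hpos (by linarith [hfac])
  simpa using this

theorem low_dim_embeddings_capture_triangles (n c : ℕ) (hc : 3 ≤ c) (hdvd : c ∣ n) :
    ∃ X Y : Matrix (Fin n) (Fin 3) ℝ, ∃ G : SimpleGraph (Fin n),
      (∀ i j : Fin n, G.Adj i j ↔ i ≠ j ∧ sigma ((X * Yᵀ) i j) = 1) ∧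
      (∀ v : Fin n, (G.neighborSet v).ncard = c - 1) ∧
      n * (c - 1) * (c - 2) / 6 ≤ (G.cliqueSet 3).ncard := by
  classical
  have hc0 : 0 < c := by omega
  have hnc : n / c * c = n := Nat.div_mul_cancel hdvd
  set b : Fin n → ℕ := fun i => (i : ℕ) / c with hbdef
  have hdiv : ∀ (B m : ℕ), m / c = B ↔ ∃ r, r < c ∧ m = B * c + r := by
    intro B m
    constructor
    · intro h
      refine ⟨m % c, Nat.mod_lt _ hc0, ?_⟩
      have h2 := Nat.div_add_mod m c
      rw [h] at h2
      rw [mul_comm]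
      omega
    · rintro ⟨r, hr, rfl⟩
      rw [mul_comm, Nat.mul_add_div hc0, Nat.div_eq_of_lt hr, add_zero]
  have hblt : ∀ i : Fin n, b i < n / c := fun i =>
    Nat.div_lt_div_of_lt_of_dvd hdvd i.2
  set g : Fin (n / c) → Fin c → Fin n := fun B r =>
    ⟨B * c + r, by
      have h1 : (B : ℕ) + 1 ≤ n / c := B.2
      have h2 : ((B : ℕ) + 1) * c ≤ n := by
        calc ((B : ℕ) + 1) * c ≤ n / c * c := Nat.mul_le_mul_right _ h1
          _ = n := hnc
      have h3 := r.2
      nlinarith⟩ with hgdef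
  have hgblock : ∀ B r, b (g B r) = B := by
    intro B r
    show ((B : ℕ) * c + r) / c = B
    rw [hdiv]
    exact ⟨r, r.2, rfl⟩
  have hginj : ∀ B, Function.Injective (g B) := by
    intro B r1 r2 h
    have : (B : ℕ) * c + r1 = (B : ℕ) * c + r2 := congrArg Fin.val h
    exact Fin.ext (by omega)
  have hmem : ∀ (B : Fin (n / c)) (j : Fin n),
      j ∈ Finset.univ.image (g B) ↔ b j = B := by
    intro B j
    simp only [Finset.mem_image, Finset.mem_univ, true_and]
    constructor
    · rintro ⟨r, rfl⟩; exact hgblock B r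
    · intro h
      have h' : (j : ℕ) / c = B := h
      rw [hdiv] at h'
      obtain ⟨r, hr, hjr⟩ := h'
      exact ⟨⟨r, hr⟩, Fin.ext hjr.symm⟩
  set G : SimpleGraph (Fin n) :=
    ⟨fun i j => i ≠ j ∧ b i = b j,
      ⟨fun i j h => ⟨h.1.symm, h.2.symm⟩⟩,
      ⟨fun i h => h.1 rfl⟩⟩ with hGdef
  have hGAdj : ∀ i j, G.Adj i j ↔ i ≠ j ∧ b i = b j := fun i j => Iff.rfl
  set X : Matrix (Fin n) (Fin 3) ℝ := fun i k => ![1 - (b i : ℝ) ^ 2, 2 * (b i : ℝ), -1] k with hX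
  set Y : Matrix (Fin n) (Fin 3) ℝ := fun j k => ![(1 : ℝ), (b j : ℝ), (b j : ℝ) ^ 2] k with hY
  refine ⟨X, Y, G, ?_, ?_, ?_⟩
  · intro i j
    have hv : (X * Yᵀ) i j = 1 - ((b i : ℝ) - (b j : ℝ)) ^ 2 := by
      simp only [Matrix.mul_apply, Matrix.transpose_apply]
      simp [hX, hY, Matrix.mul_apply, Matrix.transpose_apply, Fin.sum_univ_three]
      ring
    rw [hGAdj, hv]
    refine and_congr_right fun _ => ?_
    constructor
    · intro h
      rw [h]
      unfold sigma
      norm_num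
    · intro h
      by_contra hne
      have hzi : ((b i : ℤ) - (b j : ℤ)) ≠ 0 := by
        intro h0
        exact hne (by exact_mod_cast sub_eq_zero.mp h0)
      have h1 : (1 : ℤ) ≤ ((b i : ℤ) - (b j : ℤ)) ^ 2 := by
        have := Int.one_le_abs hzi
        nlinarith [sq_abs ((b i : ℤ) - (b j : ℤ))]
      have h1r : (1 : ℝ) ≤ ((b i : ℝ) - (b j : ℝ)) ^ 2 := by
        have := h1
        push_cast at this ⊢
        exact_mod_cast this
      have h0 : sigma (1 - ((b i : ℝ) - (b j : ℝ)) ^ 2) = 0 := by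
        unfold sigma
        rw [max_eq_left (le_trans (min_le_right _ _) (by linarith))]
      rw [h0] at h
      norm_num at h
  · intro v
    set B : Fin (n / c) := ⟨b v, hblt v⟩ with hBdef
    have hvmem : v ∈ Finset.univ.image (g B) := (hmem B v).mpr rfl
    have hset : G.neighborSet v = ↑((Finset.univ.image (g B)).erase v) := by
      ext j
      simp only [SimpleGraph.mem_neighborSet, hGAdj, Finset.coe_erase, Set.mem_diff,
        Finset.mem_coe, Set.mem_singleton_iff, hmem B j]
      constructor
      · rintro ⟨h1, h2⟩
        exact ⟨h2.symm, fun h => h1 h.symm⟩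
      · rintro ⟨h1, h2⟩
        exact ⟨fun h => h2 h.symm, h1.symm⟩
    rw [hset, Set.ncard_coe_finset, Finset.card_erase_of_mem hvmem,
      Finset.card_image_of_injective _ (hginj B), Finset.card_univ, Fintype.card_fin]
  · set F : Finset (Finset (Fin n)) :=
      ((Finset.univ : Finset (Fin (n / c))) ×ˢ
        (Finset.univ : Finset (Fin c)).powersetCard 3).image
        (fun p => p.2.image (g p.1)) with hF
    have hsub : ↑F ⊆ G.cliqueSet 3 := by
      intro s hs
      simp only [hF, Finset.coe_image, Set.mem_image, Finset.mem_coe,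
        Finset.mem_product, Finset.mem_univ, true_and, Finset.mem_powersetCard] at hs
      obtain ⟨⟨B, t⟩, ⟨-, ht3⟩, rfl⟩ := hs
      refine SimpleGraph.mem_cliqueSet_iff.mpr ⟨?_, ?_⟩
      · intro x hx y hy hxy
        simp only [Finset.coe_image, Set.mem_image, Finset.mem_coe] at hx hy
        obtain ⟨r1, -, rfl⟩ := hx
        obtain ⟨r2, -, rfl⟩ := hy
        exact (hGAdj _ _).mpr ⟨hxy, by rw [hgblock, hgblock]⟩
      · rw [Finset.card_image_of_injective _ (hginj B), ht3]
    have hinj : Set.InjOn (fun p : Fin (n / c) × Finset (Fin c) => p.2.image (g p.1))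
        ↑((Finset.univ : Finset (Fin (n / c))) ×ˢ
          (Finset.univ : Finset (Fin c)).powersetCard 3) := by
      rintro ⟨B1, t1⟩ h1 ⟨B2, t2⟩ h2 heq
      simp only [Finset.coe_product, Set.mem_prod, Finset.mem_coe,
        Finset.mem_powersetCard] at h1 h2
      have ht1 : t1.card = 3 := h1.2.2
      have hne : t1.Nonempty := Finset.card_pos.mp (by omega)
      obtain ⟨r0, hr0⟩ := hne
      have hx1 : g B1 r0 ∈ t1.image (g B1) := Finset.mem_image_of_mem _ hr0
      have heq' : t1.image (g B1) = t2.image (g B2) := heq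
      have hx2 : g B1 r0 ∈ t2.image (g B2) := heq' ▸ hx1
      obtain ⟨r2, -, hr2⟩ := Finset.mem_image.mp hx2
      have hBB : B1 = B2 := by
        have e1 : b (g B1 r0) = B1 := hgblock B1 r0
        have e2 : b (g B1 r0) = B2 := by rw [← hr2]; exact hgblock B2 r2
        exact Fin.ext (by rw [← e1, e2])
      subst hBB
      have htt : t1 = t2 := by
        exact Finset.image_injective (hginj B1) heq'
      simp [htt]
    have hcard : F.card = n / c * c.choose 3 := by
      rw [hF, Finset.card_image_of_injOn hinj, Finset.card_product, Finset.card_univ,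
        Fintype.card_fin, Finset.card_powersetCard, Finset.card_univ, Fintype.card_fin]
    have hle : F.card ≤ (G.cliqueSet 3).ncard := by
      calc F.card = (↑F : Set (Finset (Fin n))).ncard := (Set.ncard_coe_finset F).symm
        _ ≤ (G.cliqueSet 3).ncard := Set.ncard_le_ncard hsub (Set.toFinite _)
    have key : n / c * c.choose 3 * 6 = n * (c - 1) * (c - 2) := by
      have h1 := six_mul_choose_three c hc
      calc n / c * c.choose 3 * 6 = n / c * (c.choose 3 * 6) := by ring
        _ = n / c * (c * (c - 1) * (c - 2)) := by rw [h1]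
        _ = n / c * c * ((c - 1) * (c - 2)) := by ring
        _ = n * (c - 1) * (c - 2) := by rw [hnc]; ring
    omega
end

section
/- Let G be a graph on n vertices with maximum degree at most c. Then the sign-rank of its adjacency matrix is at most 2c + 1; that is, there exists a real matrix M of rank at most 2c+1 with no zero entries such that M_{ij} > 0 if and only if (i,j) is an edge of G (and M_{ij} < 0 otherwise). -/
open Polynomial Finset

private lemma fin_cast_sq_ge (n : ℕ) (u j : Fin n) (h : u ≠ j) :
    (1:ℝ) ≤ (((j:ℕ):ℝ) - ((u:ℕ):ℝ))^2 := by
  have hz : ((j:ℤ) - (u:ℤ)) ≠ 0 := by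
    intro hc
    apply h
    omega
  have h1 : (1:ℤ) ≤ |(j:ℤ) - (u:ℤ)| := Int.one_le_abs hz
  have : (1:ℝ) ≤ |((j:ℤ):ℝ) - ((u:ℤ):ℝ)| := by
    rw [← Int.cast_sub, ← Int.cast_abs]
    exact_mod_cast h1
  calc (1:ℝ) = 1^2 := by ring
    _ ≤ |((j:ℤ):ℝ) - ((u:ℤ):ℝ)|^2 := by
        apply pow_le_pow_left₀ (by norm_num) this
    _ = (((j:ℕ):ℝ) - ((u:ℕ):ℝ))^2 := by
        rw [sq_abs]; push_cast; ring

theorem sign_rank_le_of_bounded_degree (n c : ℕ) (G : SimpleGraph (Fin n))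
    [DecidableRel G.Adj] (hdeg : ∀ v, G.degree v ≤ c) :
    ∃ M : Matrix (Fin n) (Fin n) ℝ, M.rank ≤ 2 * c + 1 ∧
      ∀ i j : Fin n, (0 < M i j ↔ G.Adj i j) ∧ (¬ G.Adj i j → M i j < 0) := by
  classical
  set P : Fin n → Polynomial ℝ :=
    fun i => -∏ u ∈ G.neighborFinset i, ((X - C (((u:ℕ):ℝ)))^2 - C (2⁻¹ : ℝ)) with hP
  have hdegP : ∀ i, (P i).natDegree < 2 * c + 1 := by
    intro i
    have h1 : (P i).natDegree ≤ 2 * c := by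
      rw [hP]
      simp only [natDegree_neg]
      calc (∏ u ∈ G.neighborFinset i, ((X - C (((u:ℕ):ℝ)))^2 - C (2⁻¹ : ℝ))).natDegree
          ≤ ∑ u ∈ G.neighborFinset i, ((X - C (((u:ℕ):ℝ)))^2 - C (2⁻¹ : ℝ)).natDegree :=
            natDegree_prod_le _ _
        _ ≤ ∑ _u ∈ G.neighborFinset i, 2 := by
            apply Finset.sum_le_sum
            intro u _
            apply le_trans (natDegree_sub_le _ _)
            have h2 : ((X - C (((u:ℕ):ℝ)))^2).natDegree = 2 := by
              rw [natDegree_pow, natDegree_X_sub_C]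
            rw [h2, natDegree_C]
            simp
        _ = 2 * G.degree i := by
            rw [Finset.sum_const, SimpleGraph.card_neighborFinset_eq_degree]
            ring
        _ ≤ 2 * c := by have := hdeg i; omega
    omega
  set A : Matrix (Fin n) (Fin (2*c+1)) ℝ := fun i k => (P i).coeff k with hA
  set B : Matrix (Fin (2*c+1)) (Fin n) ℝ := fun k j => (((j:ℕ):ℝ))^(k:ℕ) with hB
  refine ⟨A * B, ?_, ?_⟩
  · calc (A * B).rank ≤ A.rank := Matrix.rank_mul_le_left A B
      _ ≤ Fintype.card (Fin (2*c+1)) := Matrix.rank_le_card_width A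
      _ = 2 * c + 1 := by simp
  · have hM : ∀ i j, (A * B) i j =
        -∏ u ∈ G.neighborFinset i, ((((j:ℕ):ℝ) - ((u:ℕ):ℝ))^2 - 2⁻¹) := by
      intro i j
      have heval : (P i).eval (((j:ℕ):ℝ)) =
          -∏ u ∈ G.neighborFinset i, ((((j:ℕ):ℝ) - ((u:ℕ):ℝ))^2 - 2⁻¹) := by
        rw [hP]
        simp [eval_prod]
      rw [← heval, Polynomial.eval_eq_sum_range' (hdegP i)]
      rw [Matrix.mul_apply]
      rw [Finset.sum_range fun k => (P i).coeff k * (((j:ℕ):ℝ))^k]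
    intro i j
    have key : ∀ i j : Fin n, ¬ G.Adj i j → (A * B) i j < 0 := by
      intro i j hadj
      rw [hM]
      simp only [neg_neg, Left.neg_neg_iff]
      apply Finset.prod_pos
      intro u hu
      have huj : u ≠ j := by
        rintro rfl
        exact hadj ((SimpleGraph.mem_neighborFinset _ _ _).mp hu)
      have := fin_cast_sq_ge n u j huj
      linarith
    constructor
    · constructor
      · intro hpos
        by_contra hadj
        have := key i j hadj
        linarith
      · intro hadj
        rw [hM]
        have hj : j ∈ G.neighborFinset i := (SimpleGraph.mem_neighborFinset _ _ _).mpr hadj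
        rw [Finset.prod_eq_prod_diff_singleton_mul hj]
        have h1 : (((j:ℕ):ℝ) - ((j:ℕ):ℝ))^2 - 2⁻¹ = -2⁻¹ := by ring
        rw [h1]
        have h2 : (0:ℝ) < ∏ u ∈ G.neighborFinset i \ {j}, ((((j:ℕ):ℝ) - ((u:ℕ):ℝ))^2 - 2⁻¹) := by
          apply Finset.prod_pos
          intro u hu
          have huj : u ≠ j := by
            intro h; simp [h] at hu
          have := fin_cast_sq_ge n u j huj
          linarith
        nlinarith
    · exact key i j
end

section
/- Let A ∈ {0,1}^{n×n} be a matrix such that every row consists of at most b maximal contiguous blocks of ones. Then there exist X, Y ∈ ℝ^{n×(2b+1)} such that A = σ(XYᵀ), where σ(t) = max(0, min(1, t)) is applied entrywise. In particular, a block-diagonal 0/1 matrix (one contiguous block of ones per row) admits such a factorization with dimension 3. -/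
open Matrix

section RowPoly
open Polynomial

lemma row_poly (b k : ℕ) (hk : k ≤ b) (l r : Fin k → ℕ) :
    ∃ p : Polynomial ℝ, p.natDegree < 2 * b + 1 ∧
      ∀ j : ℕ, ((∃ s, l s ≤ j ∧ j ≤ r s) → 1 ≤ p.eval (j : ℝ)) ∧
        (¬ (∃ s, l s ≤ j ∧ j ≤ r s) → p.eval (j : ℝ) ≤ 0) := by
  classical
  set S : ℕ → Prop := fun m => ∃ s, l s ≤ m ∧ m ≤ r s with hSdef
  have hbnd : ∀ t, S t → t ≤ Finset.univ.sup r := by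
    rintro t ⟨s, _, h2⟩
    exact le_trans h2 (Finset.le_sup (Finset.mem_univ s))
  have hEex : ∀ m : ℕ, ∃ t, m ≤ t ∧ ¬ S (t + 1) := by
    intro m
    refine ⟨m + Finset.univ.sup r, Nat.le_add_right _ _, fun h => ?_⟩
    have := hbnd _ h
    omega
  set E : ℕ → ℕ := fun m => Nat.find (hEex m) with hEdef
  have hEle : ∀ m, m ≤ E m := fun m => (Nat.find_spec (hEex m)).1
  have hEout : ∀ m, ¬ S (E m + 1) := fun m => (Nat.find_spec (hEex m)).2
  have hEmin : ∀ m t, t < E m → m ≤ t → S (t + 1) := by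
    intro m t ht hmt
    have := Nat.find_min (hEex m) ht
    push_neg at this
    exact this hmt
  have hfill : ∀ m, S m → ∀ t, m ≤ t → t ≤ E m → S t := by
    intro m hm t
    induction t with
    | zero => intro h1 _; have : m = 0 := Nat.le_zero.mp h1; exact this ▸ hm
    | succ t ih =>
      intro h1 h2
      rcases Nat.lt_or_ge m (t + 1) with h | h
      · exact hEmin m t (lt_of_lt_of_le (Nat.lt_succ_self t) h2) (Nat.lt_succ_iff.mp h)
      · have : m = t + 1 := le_antisymm h1 h
        exact this ▸ hm
  set starts : Finset ℕ :=
    (Finset.range (Finset.univ.sup r + 1)).filter (fun m => S m ∧ (m = 0 ∨ ¬ S (m - 1)))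
    with hst
  have hmem : ∀ m, m ∈ starts ↔ S m ∧ (m = 0 ∨ ¬ S (m - 1)) := by
    intro m
    simp only [hst, Finset.mem_filter, Finset.mem_range, and_iff_right_iff_imp]
    intro h
    have := hbnd m h.1
    omega
  -- cardinality bound
  have hcard : starts.card ≤ k := by
    have hex : ∀ m ∈ starts, ∃ s : Fin k, l s = m := by
      intro m hm
      rw [hmem] at hm
      obtain ⟨⟨s, hs1, hs2⟩, hstart⟩ := hm
      refine ⟨s, ?_⟩
      rcases Nat.lt_or_ge (l s) m with h | h
      · exfalso
        rcases hstart with h0 | hns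
        · omega
        · exact hns ⟨s, by omega, by omega⟩
      · omega
    choose f hf using hex
    rcases Finset.eq_empty_or_nonempty starts with he | ⟨m₀, hm₀⟩
    · simp [he]
    · set d : Fin k := f m₀ hm₀ with hd
      set f' : ℕ → Fin k := fun m => if h : m ∈ starts then f m h else d with hf'def
      have hf' : ∀ m ∈ starts, l (f' m) = m := by
        intro m hm
        simp only [hf'def, dif_pos hm]
        exact hf m hm
      have : starts.card ≤ (Finset.univ : Finset (Fin k)).card := by
        refine Finset.card_le_card_of_injOn f' (fun a _ => Finset.mem_univ _) ?_
        intro a ha b' hb hab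
        simp only [Finset.mem_coe] at ha hb
        rw [← hf' a ha, ← hf' b' hb, hab]
      simpa using this
  -- characterization of S via runs
  have hrun : ∀ j : ℕ, S j ↔ ∃ m ∈ starts, m ≤ j ∧ j ≤ E m := by
    intro j
    constructor
    · intro hj
      have hPex : ∃ m', m' ≤ j ∧ ∀ t, m' ≤ t → t ≤ j → S t := by
        refine ⟨j, le_rfl, fun t h1 h2 => ?_⟩
        have : t = j := le_antisymm h2 h1
        exact this ▸ hj
      set m0 := Nat.find hPex with hm0def
      obtain ⟨hm0j, hm0fill⟩ := Nat.find_spec hPex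
      have hSm0 : S m0 := hm0fill m0 le_rfl hm0j
      have hstart : m0 = 0 ∨ ¬ S (m0 - 1) := by
        by_contra hcon
        push_neg at hcon
        obtain ⟨h0, hprev⟩ := hcon
        have hlt : m0 - 1 < m0 := by omega
        refine Nat.find_min hPex hlt ⟨by omega, fun t h1 h2 => ?_⟩
        rcases Nat.lt_or_ge t m0 with h | h
        · have : t = m0 - 1 := by omega
          exact this ▸ hprev
        · exact hm0fill t h h2
      have hjE : j ≤ E m0 := by
        by_contra hcon
        push_neg at hcon
        exact hEout m0 (hm0fill (E m0 + 1) (by have := hEle m0; omega) (by omega))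
      exact ⟨m0, (hmem m0).2 ⟨hSm0, hstart⟩, hm0j, hjE⟩
    · rintro ⟨m, hm, h1, h2⟩
      exact hfill m ((hmem m).1 hm).1 j h1 h2
  -- disjointness of runs
  have hdisj : ∀ j : ℕ, ∀ m1 ∈ starts, ∀ m2 ∈ starts, m1 ≠ m2 →
      m1 ≤ j → j ≤ E m1 → ¬ (m2 ≤ j ∧ j ≤ E m2) := by
    have key : ∀ j : ℕ, ∀ m1 ∈ starts, ∀ m2 ∈ starts, m1 < m2 →
        m1 ≤ j → j ≤ E m1 → ¬ (m2 ≤ j ∧ j ≤ E m2) := by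
      rintro j m1 hm1 m2 hm2 hlt h1 h2 ⟨h3, h4⟩
      have hSm1 : S m1 := ((hmem m1).1 hm1).1
      have hstart2 := ((hmem m2).1 hm2).2
      rcases hstart2 with h0 | hns
      · omega
      · exact hns (hfill m1 hSm1 (m2 - 1) (by omega) (by omega))
    intro j m1 hm1 m2 hm2 hne h1 h2 hcon
    rcases Nat.lt_or_ge m1 m2 with h | h
    · exact key j m1 hm1 m2 hm2 h h1 h2 hcon
    · have h' : m2 < m1 := by omega
      exact key j m2 hm2 m1 hm1 h' hcon.1 hcon.2 ⟨h1, h2⟩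
  -- the polynomial
  set q : ℕ → Polynomial ℝ := fun m =>
    C 4 * (X - C ((m : ℝ) - 1/2)) * (X - C ((E m : ℝ) + 1/2)) with hq
  refine ⟨-(∏ m ∈ starts, q m), ?_, ?_⟩
  · rw [natDegree_neg]
    have h1 : (∏ m ∈ starts, q m).natDegree ≤ ∑ m ∈ starts, (q m).natDegree :=
      natDegree_prod_le _ _
    have h2 : ∀ m ∈ starts, (q m).natDegree ≤ 2 := by
      intro m _
      have hd1 : (C (4:ℝ) * (X - C ((m : ℝ) - 1/2))).natDegree ≤ 1 :=
        le_trans natDegree_mul_le (by rw [natDegree_C, natDegree_X_sub_C])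
      calc (q m).natDegree ≤ (C (4:ℝ) * (X - C ((m : ℝ) - 1/2))).natDegree
              + (X - C ((E m : ℝ) + 1/2)).natDegree := natDegree_mul_le
        _ ≤ 1 + 1 := add_le_add hd1 (natDegree_X_sub_C _).le
        _ = 2 := by norm_num
    have h3 : ∑ m ∈ starts, (q m).natDegree ≤ starts.card * 2 := by
      calc ∑ m ∈ starts, (q m).natDegree ≤ ∑ _m ∈ starts, 2 := Finset.sum_le_sum h2
        _ = starts.card * 2 := by rw [Finset.sum_const, smul_eq_mul]
    omega
  · intro j
    have hqeval : ∀ m, (q m).eval (j : ℝ) =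
        4 * ((j : ℝ) - ((m : ℝ) - 1/2)) * ((j : ℝ) - ((E m : ℝ) + 1/2)) := by
      intro m; simp [hq]
    have hqpos : ∀ m, ¬ (m ≤ j ∧ j ≤ E m) → 1 ≤ (q m).eval (j : ℝ) := by
      intro m hm
      rw [hqeval]
      rcases Nat.lt_or_ge j m with h | h
      · have hj : (j : ℝ) + 1 ≤ (m : ℝ) := by exact_mod_cast h
        have hE : (m : ℝ) ≤ (E m : ℝ) := by exact_mod_cast hEle m
        nlinarith
      · have hjE : E m < j := by
          rcases Nat.lt_or_ge (E m) j with h' | h'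
          · exact h'
          · exact absurd ⟨h, h'⟩ hm
        have hj : (E m : ℝ) + 1 ≤ (j : ℝ) := by exact_mod_cast hjE
        have hE : (m : ℝ) ≤ (E m : ℝ) := by exact_mod_cast hEle m
        nlinarith
    have hqneg : ∀ m, m ≤ j → j ≤ E m → (q m).eval (j : ℝ) ≤ -1 := by
      intro m h1 h2
      rw [hqeval]
      have hj1 : (m : ℝ) ≤ (j : ℝ) := by exact_mod_cast h1
      have hj2 : (j : ℝ) ≤ (E m : ℝ) := by exact_mod_cast h2
      nlinarith
    have hevalprod : Polynomial.eval (j : ℝ) (-(∏ m ∈ starts, q m)) =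
        -(∏ m ∈ starts, (q m).eval (j : ℝ)) := by
      simp [eval_prod]
    constructor
    · intro hSj
      obtain ⟨m0, hm0, h1, h2⟩ := (hrun j).1 hSj
      rw [hevalprod, ← Finset.prod_erase_mul _ _ hm0]
      have hrest : 1 ≤ ∏ m ∈ starts.erase m0, (q m).eval (j : ℝ) := by
        calc (1:ℝ) = ∏ _m ∈ starts.erase m0, (1:ℝ) := by simp
          _ ≤ ∏ m ∈ starts.erase m0, (q m).eval (j : ℝ) := by
              refine Finset.prod_le_prod (fun i _ => zero_le_one) ?_
              intro m hm
              obtain ⟨hne, hmst⟩ := Finset.mem_erase.1 hm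
              exact hqpos m (hdisj j m0 hm0 m hmst (Ne.symm hne) h1 h2)
      have hm0v := hqneg m0 h1 h2
      nlinarith
    · intro hSj
      rw [hevalprod]
      have : 1 ≤ ∏ m ∈ starts, (q m).eval (j : ℝ) := by
        calc (1:ℝ) = ∏ _m ∈ starts, (1:ℝ) := by simp
          _ ≤ ∏ m ∈ starts, (q m).eval (j : ℝ) := by
              refine Finset.prod_le_prod (fun i _ => zero_le_one) ?_
              intro m hm
              refine hqpos m fun hc => hSj ?_
              exact (hrun j).2 ⟨m, hm, hc.1, hc.2⟩
      linarith

end RowPoly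

theorem exact_factorization_of_block_sparse_rows (n b : ℕ)
    (A : Matrix (Fin n) (Fin n) ℝ)
    (hbin : ∀ i j, A i j = 0 ∨ A i j = 1)
    (hblocks : ∀ i : Fin n, ∃ k ≤ b, ∃ l r : Fin k → Fin n,
      (∀ s, l s ≤ r s) ∧
      (∀ j : Fin n, A i j = 1 ↔ ∃ s, l s ≤ j ∧ j ≤ r s)) :
    ∃ X Y : Matrix (Fin n) (Fin (2 * b + 1)) ℝ, A = (X * Yᵀ).map sigma := by
  classical
  choose k hk l r _hlr hA using hblocks
  have hrow : ∀ i : Fin n, ∃ p : Polynomial ℝ, p.natDegree < 2 * b + 1 ∧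
      ∀ j : ℕ, ((∃ s, (l i s : ℕ) ≤ j ∧ j ≤ (r i s : ℕ)) → 1 ≤ p.eval (j : ℝ)) ∧
        (¬ (∃ s, (l i s : ℕ) ≤ j ∧ j ≤ (r i s : ℕ)) → p.eval (j : ℝ) ≤ 0) :=
    fun i => row_poly b (k i) (hk i) (fun s => (l i s : ℕ)) (fun s => (r i s : ℕ))
  choose p hdeg hp using hrow
  set X0 : Matrix (Fin n) (Fin (2 * b + 1)) ℝ :=
    Matrix.of (fun i d => (p i).coeff (d : ℕ)) with hX0
  set Y0 : Matrix (Fin n) (Fin (2 * b + 1)) ℝ :=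
    Matrix.of (fun j d => ((j : ℕ) : ℝ) ^ (d : ℕ)) with hY0
  refine ⟨X0, Y0, ?_⟩
  ext i j
  have hXY : (X0 * Y0ᵀ) i j = (p i).eval ((j : ℕ) : ℝ) := by
    rw [Matrix.mul_apply, Polynomial.eval_eq_sum_range' (hdeg i)]
    rw [← Fin.sum_univ_eq_sum_range (fun d => (p i).coeff d * ((j : ℕ) : ℝ) ^ d) (2 * b + 1)]
    simp [hX0, hY0, Matrix.transpose_apply]
  rw [Matrix.map_apply, hXY]
  have hiff : A i j = 1 ↔ ∃ s, (l i s : ℕ) ≤ (j : ℕ) ∧ (j : ℕ) ≤ (r i s : ℕ) := by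
    rw [hA i j]
    simp only [Fin.le_def]
  rcases hbin i j with h0 | h1
  · have hne : ¬ (∃ s, (l i s : ℕ) ≤ (j : ℕ) ∧ (j : ℕ) ≤ (r i s : ℕ)) := by
      rw [← hiff, h0]
      norm_num
    have hle := (hp i (j : ℕ)).2 hne
    rw [h0]
    unfold sigma
    rw [min_eq_right (le_trans hle zero_le_one), max_eq_left hle]
  · have hone := (hp i (j : ℕ)).1 (hiff.1 h1)
    rw [h1]
    unfold sigma
    rw [min_eq_left hone, max_eq_right zero_le_one]
end
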